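/- Let D be an orientation of a finite undirected graph G and let ℓ be a nonnegative integer. Suppose P is a reversible directed path in D from u to v with δ_D(v) = ℓ and that no reversible path in D ends at a vertex of indegree greater than ℓ. Let Q be the set of vertices of indegree greater than ℓ in D and let Q' be the set of vertices that have a directed path in D to some vertex of Q. Then u ∉ Q' and v ∉ Q', and in the orientation D' obtained from D by reversing P, the set of vertices of indegree greater than ℓ is still Q and the set of vertices with a directed path to a vertex of Q is still Q'. -/

import Mathlib

/-- An orientation of an undirected simple graph `G`: each edge is assigned
exactly one direction, giving the arc relation `arc`. -/
structure GraphOrientation {V : Type*} (G : SimpleGraph V) where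
  arc : V → V → Prop
  adj_iff : ∀ u v, G.Adj u v ↔ (arc u v ∨ arc v u)
  asymm : ∀ u v, arc u v → ¬ arc v u

/-- The indegree of a vertex in an orientation. -/
noncomputable def indeg {V : Type*} {G : SimpleGraph V} (D : GraphOrientation G) (v : V) : ℕ :=
  {u | D.arc u v}.ncard

/-- The list of consecutive arcs of a path given as a list of vertices. -/
def pathArcs {V : Type*} (p : List V) : List (V × V) := p.zip p.tail

/-- The list of arcs of a cycle given as a list of (distinct) vertices,
including the closing arc from the last vertex back to the first. -/
def cycleArcs {V : Type*} (p : List V) : List (V × V) := p.zip (p.rotate 1)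

/-- `p` is a (simple) directed path from `u` to `v` with respect to the arc relation `A`. -/
def IsDipath {V : Type*} (A : V → V → Prop) (p : List V) (u v : V) : Prop :=
  p.head? = some u ∧ p.getLast? = some v ∧ p.Nodup ∧ p.Chain' A

/-- `D'` is obtained from `D` by reversing exactly the arcs in the list `A`
(all of which must be arcs of `D`). -/
def ReversalAlong {V : Type*} {G : SimpleGraph V} (D D' : GraphOrientation G)
    (A : List (V × V)) : Prop :=
  (∀ a ∈ A, D.arc a.1 a.2) ∧ ∀ u v, D'.arc u v ↔ ((D.arc u v ∧ (u, v) ∉ A) ∨ (v, u) ∈ A)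

/-- `D'` is obtained from `D` by reversing every arc of some directed cycle. -/
def CycleReversal {V : Type*} {G : SimpleGraph V} (D D' : GraphOrientation G) : Prop :=
  ∃ p : List V, p ≠ [] ∧ p.Nodup ∧ ReversalAlong D D' (cycleArcs p)

/-- `D'` is obtained from `D` by a weak reversal: reversing a directed path
from `u` to `v` where `δ(u) = δ(v) - 1`. -/
def WeakReversal {V : Type*} {G : SimpleGraph V} (D D' : GraphOrientation G) : Prop :=
  ∃ (p : List V) (u v : V), IsDipath D.arc p u v ∧ indeg D u + 1 = indeg D v ∧
    ReversalAlong D D' (pathArcs p)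

/-- `D` contains no reversible path, i.e. no directed path from `u` to `v`
with `δ(u) < δ(v) - 1`. -/
def NoReversiblePath {V : Type*} {G : SimpleGraph V} (D : GraphOrientation G) : Prop :=
  ∀ u v : V, Relation.ReflTransGen D.arc u v → indeg D v ≤ indeg D u + 1

/-- The indegree sequence of an orientation, sorted in decreasing order. -/
noncomputable def degSeq {V : Type*} [Fintype V] {G : SimpleGraph V}
    (D : GraphOrientation G) : List ℕ :=
  ((Finset.univ.val.map (indeg D)).sort (· ≤ ·)).reverse

/-- Lexicographic (non-strict) comparison of lists of naturals. -/
def lexLE (l₁ l₂ : List ℕ) : Prop := l₁ = l₂ ∨ List.Lex (· < ·) l₁ l₂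

/-- `u` two-reaches `v`: there are two arc-disjoint directed paths from `u` to `v`. -/
def TwoReaches {V : Type*} (A : V → V → Prop) (u v : V) : Prop :=
  ∃ p q : List V, IsDipath A p u v ∧ IsDipath A q u v ∧ ∀ a ∈ pathArcs p, a ∉ pathArcs q

/-- Reachability inside the induced subgraph `G[U]`. -/
def ReachIn {V : Type*} (G : SimpleGraph V) (U : Set V) (x y : V) : Prop :=
  Relation.ReflTransGen (fun a b => a ∈ U ∧ b ∈ U ∧ G.Adj a b) x y

/-- `C` is a connected component of the induced undirected subgraph `G[U]`. -/
def IsCompOf {V : Type*} (G : SimpleGraph V) (U C : Set V) : Prop :=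
  ∃ x ∈ U, C = {y | ReachIn G U x y}

namespace Stmt6Aux


variable {V : Type*}

lemma mem_pathArcs_iff {p : List V} {a b : V} :
    (a, b) ∈ pathArcs p ↔ ∃ i, p[i]? = some a ∧ p[i + 1]? = some b := by
  simp only [pathArcs, List.mem_iff_getElem?, List.getElem?_zip_eq_some, List.getElem?_tail]

lemma idx_unique {p : List V} (hn : p.Nodup) {i j : ℕ} {w : V}
    (hi : p[i]? = some w) (hj : p[j]? = some w) : i = j := by
  have h := List.nodup_iff_getElem?_ne_getElem?.mp hn
  have hil : i < p.length := by
    by_contra hc; rw [List.getElem?_eq_none (by omega)] at hi; cases hi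
  have hjl : j < p.length := by
    by_contra hc; rw [List.getElem?_eq_none (by omega)] at hj; cases hj
  by_contra hne
  rcases Nat.lt_or_ge i j with hlt | hge
  · exact h i j hlt hjl (hi.trans hj.symm)
  · exact h j i (by omega) hil (hj.trans hi.symm)

lemma reach_of_mem {A : V → V → Prop} :
    ∀ (p : List V) (x : V), p.Chain' A → ∀ u, p.head? = some u → x ∈ p →
      Relation.ReflTransGen A u x := by
  intro p
  induction p with
  | nil => simp
  | cons a t ih =>
    intro x hc u hh hm
    simp only [List.head?_cons, Option.some.injEq] at hh
    subst hh
    rcases List.mem_cons.mp hm with rfl | hm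
    · exact Relation.ReflTransGen.refl
    · match t, hm, hc, ih with
      | b :: t', hm, hc, ih =>
        have hc' := List.isChain_cons_cons.mp hc
        exact Relation.ReflTransGen.head hc'.1 (ih x hc'.2 b rfl hm)

lemma dipath_rtg {A : V → V → Prop} {p : List V} {x y : V}
    (h : IsDipath A p x y) : Relation.ReflTransGen A x y :=
  reach_of_mem p y h.2.2.2 x h.1 (List.mem_of_getLast? h.2.1)

lemma exists_dipath {A : V → V → Prop} {x y : V} (h : Relation.ReflTransGen A x y) :
    ∃ p, IsDipath A p x y := by
  induction h using Relation.ReflTransGen.head_induction_on with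
  | refl => exact ⟨[y], rfl, rfl, List.nodup_singleton y, List.isChain_singleton y⟩
  | head hab _ ih =>
    rename_i a b _
    obtain ⟨q, hq1, hq2, hq3, hq4⟩ := ih
    by_cases hmem : a ∈ q
    · obtain ⟨s, t, rfl⟩ := List.append_of_mem hmem
      refine ⟨a :: t, rfl, ?_, ?_, ?_⟩
      · rw [List.getLast?_append] at hq2
        cases h' : (a :: t).getLast? with
        | none => exact absurd (List.getLast?_eq_none_iff.mp h') (by simp)
        | some z => rw [h'] at hq2; simpa using hq2
      · exact (List.sublist_append_right s (a :: t)).nodup hq3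
      · exact hq4.suffix ⟨s, rfl⟩
    · match q, hq1 with
      | b :: q', hq1 =>
        simp only [List.head?_cons, Option.some.injEq] at hq1
        subst hq1
        refine ⟨a :: b :: q', rfl, by rw [List.getLast?_cons_cons]; exact hq2,
          List.nodup_cons.mpr ⟨hmem, hq3⟩, List.isChain_cons_cons.mpr ⟨hab, hq4⟩⟩

end Stmt6Aux

/-- If a reversible path ending at a vertex `v` of indegree `ℓ` is reversed, and no
reversible path ends at a vertex of indegree greater than `ℓ`, then the endpoints of
the path are not in `Q'`, and both `Q` (the vertices of indegree `> ℓ`) and `Q'`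
(the vertices having a directed path to `Q`) are unchanged by the reversal. -/
theorem stmt_6 {V : Type*} [Fintype V] (G : SimpleGraph V)
    (D D' : GraphOrientation G) (ℓ : ℕ) (p : List V) (u v : V)
    (hp : IsDipath D.arc p u v) (hrev : indeg D u + 1 < indeg D v)
    (hv : indeg D v = ℓ)
    (hmax : ∀ (q : List V) (a b : V),
      IsDipath D.arc q a b → indeg D a + 1 < indeg D b → indeg D b ≤ ℓ)
    (hD' : ReversalAlong D D' (pathArcs p)) :
    u ∉ {x | ∃ w, ℓ < indeg D w ∧ Relation.ReflTransGen D.arc x w} ∧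
    v ∉ {x | ∃ w, ℓ < indeg D w ∧ Relation.ReflTransGen D.arc x w} ∧
    {w | ℓ < indeg D' w} = {w | ℓ < indeg D w} ∧
    {x | ∃ w, ℓ < indeg D w ∧ Relation.ReflTransGen D'.arc x w} =
      {x | ∃ w, ℓ < indeg D w ∧ Relation.ReflTransGen D.arc x w} := by
  open Stmt6Aux in
  obtain ⟨hph, hpl, hpn, hpc⟩ := hp
  subst hv
  -- basic index facts
  have hpne : p ≠ [] := by rintro rfl; simp at hph
  have hlen : 1 ≤ p.length := List.length_pos_iff.mpr hpne
  have hu0 : p[0]? = some u := by rwa [List.head?_eq_getElem?] at hph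
  have hvl : p[p.length - 1]? = some v := by rwa [List.getLast?_eq_getElem?] at hpl
  -- arcs of the path are arcs of D
  have harc : ∀ a b, (a, b) ∈ pathArcs p → D.arc a b := fun a b h => hD'.1 (a, b) h
  -- membership of arc endpoints
  have hfst : ∀ a b, (a, b) ∈ pathArcs p → a ∈ p := by
    intro a b h
    obtain ⟨i, h1, _⟩ := mem_pathArcs_iff.mp h
    exact List.mem_iff_getElem?.mpr ⟨i, h1⟩
  have hsnd : ∀ a b, (a, b) ∈ pathArcs p → b ∈ p := by
    intro a b h
    obtain ⟨i, _, h2⟩ := mem_pathArcs_iff.mp h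
    exact List.mem_iff_getElem?.mpr ⟨i + 1, h2⟩
  -- u is not in Q'
  have part1 : u ∉ {x | ∃ w, indeg D v < indeg D w ∧ Relation.ReflTransGen D.arc x w} := by
    rintro ⟨w, hw, hreach⟩
    obtain ⟨q, hq⟩ := exists_dipath hreach
    exact absurd (hmax q u w hq (by omega)) (by omega)
  -- every vertex of p is reached from u
  have hreachp : ∀ x ∈ p, Relation.ReflTransGen D.arc u x :=
    fun x hx => reach_of_mem p x hpc u hph hx
  have part2 : v ∉ {x | ∃ w, indeg D v < indeg D w ∧ Relation.ReflTransGen D.arc x w} := by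
    rintro ⟨w, hw, hreach⟩
    exact part1 ⟨w, hw, (dipath_rtg ⟨hph, hpl, hpn, hpc⟩).trans hreach⟩
  -- no arc of the form (x, u) in pathArcs p
  have hnoin_u : ∀ x, (x, u) ∉ pathArcs p := by
    intro x h
    obtain ⟨i, _, h2⟩ := mem_pathArcs_iff.mp h
    exact absurd (idx_unique hpn h2 hu0) (by omega)
  -- no arc of the form (v, x) in pathArcs p
  have hnoout_v : ∀ x, (v, x) ∉ pathArcs p := by
    intro x h
    obtain ⟨i, h1, h2⟩ := mem_pathArcs_iff.mp h
    have := idx_unique hpn h1 hvl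
    subst this
    rw [List.getElem?_eq_none (by omega)] at h2
    cases h2
  -- indegree of v does not increase
  have hindv : indeg D' v ≤ indeg D v := by
    apply Set.ncard_le_ncard _ (Set.toFinite _)
    intro x hx
    rcases (hD'.2 x v).mp hx with ⟨h1, _⟩ | h2
    · exact h1
    · exact absurd h2 (hnoout_v x)
  -- indegree of u increases by at most one
  have hindu : indeg D' u ≤ indeg D u + 1 := by
    by_cases hc : ∃ c, (u, c) ∈ pathArcs p
    · obtain ⟨c, hcA⟩ := hc
      have hsub : {x | D'.arc x u} ⊆ insert c {x | D.arc x u} := by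
        intro x hx
        rcases (hD'.2 x u).mp hx with ⟨h1, _⟩ | h2
        · exact Set.mem_insert_of_mem _ h1
        · -- (u, x) ∈ pathArcs p, so x = c by uniqueness
          obtain ⟨i, hi1, hi2⟩ := mem_pathArcs_iff.mp h2
          obtain ⟨j, hj1, hj2⟩ := mem_pathArcs_iff.mp hcA
          have := idx_unique hpn hi1 hj1
          subst this
          rw [hi2] at hj2
          exact (Option.some_inj.mp hj2) ▸ Set.mem_insert _ _
      calc indeg D' u ≤ (insert c {x | D.arc x u}).ncard :=
            Set.ncard_le_ncard hsub (Set.toFinite _)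
        _ ≤ indeg D u + 1 := Set.ncard_insert_le _ _
    · have hsub : {x | D'.arc x u} ⊆ {x | D.arc x u} := by
        intro x hx
        rcases (hD'.2 x u).mp hx with ⟨h1, _⟩ | h2
        · exact h1
        · exact absurd ⟨x, h2⟩ hc
      exact le_trans (Set.ncard_le_ncard hsub (Set.toFinite _)) (Nat.le_succ _)
  -- vertices not on p keep their indegree
  have hoff : ∀ w, w ∉ p → indeg D' w = indeg D w := by
    intro w hw
    have : {x | D'.arc x w} = {x | D.arc x w} := by
      ext x
      constructor
      · intro hx
        rcases (hD'.2 x w).mp hx with ⟨h1, _⟩ | h2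
        · exact h1
        · exact absurd (hfst w x h2) hw
      · intro hx
        exact (hD'.2 x w).mpr (Or.inl ⟨hx, fun hA => hw (hsnd x w hA)⟩)
    unfold indeg; rw [this]
  -- interior vertices keep their indegree
  have hint : ∀ w, w ∈ p → w ≠ u → w ≠ v → indeg D' w = indeg D w := by
    intro w hw hwu hwv
    obtain ⟨i, hi⟩ := List.mem_iff_getElem?.mp hw
    have hiln : i < p.length := by
      by_contra hc; rw [List.getElem?_eq_none (by omega)] at hi; cases hi
    have hi0 : i ≠ 0 := by
      rintro rfl; exact hwu (Option.some_inj.mp (hi.symm.trans hu0))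
    have hilast : i ≠ p.length - 1 := by
      rintro rfl; exact hwv (Option.some_inj.mp (hi.symm.trans hvl))
    have hi1n : i - 1 < p.length := by omega
    have hi2n : i + 1 < p.length := by omega
    set a := p[i - 1]'hi1n with ha
    set c := p[i + 1]'hi2n with hc
    have haA : (a, w) ∈ pathArcs p :=
      mem_pathArcs_iff.mpr ⟨i - 1, List.getElem?_eq_getElem hi1n, by
        rw [show i - 1 + 1 = i by omega]; exact hi⟩
    have hcA : (w, c) ∈ pathArcs p :=
      mem_pathArcs_iff.mpr ⟨i, hi, List.getElem?_eq_getElem hi2n⟩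
    -- uniqueness of predecessor and successor
    have hpredu : ∀ x, (x, w) ∈ pathArcs p → x = a := by
      intro x hx
      obtain ⟨j, hj1, hj2⟩ := mem_pathArcs_iff.mp hx
      have hji : j + 1 = i := idx_unique hpn hj2 hi
      have : j = i - 1 := by omega
      subst this
      exact Option.some_inj.mp (hj1.symm.trans (List.getElem?_eq_getElem hi1n))
    have hsuccu : ∀ x, (w, x) ∈ pathArcs p → x = c := by
      intro x hx
      obtain ⟨j, hj1, hj2⟩ := mem_pathArcs_iff.mp hx
      have hji : j = i := idx_unique hpn hj1 hi
      subst hji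
      exact Option.some_inj.mp (hj2.symm.trans (List.getElem?_eq_getElem hi2n))
    have hset : {x | D'.arc x w} = insert c ({x | D.arc x w} \ {a}) := by
      ext x
      constructor
      · intro hx
        rcases (hD'.2 x w).mp hx with ⟨h1, h2⟩ | h2
        · exact Set.mem_insert_of_mem _ ⟨h1, fun hxa => h2 (by rwa [Set.mem_singleton_iff.mp hxa])⟩
        · exact (hsuccu x h2) ▸ Set.mem_insert _ _
      · intro hx
        rcases Set.mem_insert_iff.mp hx with rfl | ⟨h1, h2⟩
        · exact (hD'.2 _ w).mpr (Or.inr hcA)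
        · exact (hD'.2 x w).mpr (Or.inl ⟨h1, fun hA => h2 (Set.mem_singleton_iff.mpr (hpredu x hA))⟩)
    have haS : a ∈ {x | D.arc x w} := harc a w haA
    have hcS : c ∉ {x | D.arc x w} \ {a} := by
      rintro ⟨h1, _⟩
      exact D.asymm w c (harc w c hcA) h1
    unfold indeg
    rw [hset, Set.ncard_insert_of_notMem hcS (Set.toFinite _),
      Set.ncard_diff_singleton_add_one haS (Set.toFinite _)]
  -- part 3: Q unchanged
  have part3 : {w | indeg D v < indeg D' w} = {w | indeg D v < indeg D w} := by
    ext w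
    by_cases hw : w ∈ p
    · by_cases hwu : w = u
      · subst hwu
        simp only [Set.mem_setOf_eq]
        constructor
        · intro h; omega
        · intro h; omega
      · by_cases hwv : w = v
        · subst hwv
          simp only [Set.mem_setOf_eq]
          constructor
          · intro h; omega
          · intro h; omega
        · simp only [Set.mem_setOf_eq, hint w hw hwu hwv]
    · simp only [Set.mem_setOf_eq, hoff w hw]
  refine ⟨part1, part2, part3, ?_⟩
  -- part 4: Q' unchanged
  ext x
  simp only [Set.mem_setOf_eq]
  constructor
  · rintro ⟨w, hw, hreach⟩
    refine ⟨w, hw, ?_⟩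
    induction hreach using Relation.ReflTransGen.head_induction_on with
    | refl => exact Relation.ReflTransGen.refl
    | @head a b hab hbw ih =>
      rcases (hD'.2 a b).mp hab with ⟨h1, _⟩ | h2
      · exact Relation.ReflTransGen.head h1 ih
      · exact absurd ⟨w, hw, (hreachp b (hfst b a h2)).trans ih⟩ part1
  · rintro ⟨w, hw, hreach⟩
    refine ⟨w, hw, ?_⟩
    induction hreach using Relation.ReflTransGen.head_induction_on with
    | refl => exact Relation.ReflTransGen.refl
    | @head a b hab hbw ih =>
      by_cases hA : (a, b) ∈ pathArcs p
      · exact absurd ⟨w, hw, (hreachp b (hsnd a b hA)).trans hbw⟩ part1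
      · exact Relation.ReflTransGen.head ((hD'.2 a b).mpr (Or.inl ⟨hab, hA⟩)) ih
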